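/- There exist 32 points p₁, …, p₃₂ in the unit square [0,1]² ⊆ ℝ² such that ‖pᵢ − pⱼ‖ ≥ 0.213 for all i ≠ j. -/

import Mathlib

def Z : Fin 32 → Fin 2 → ℤ := ![
  ![389238, 106554],
  ![0, 59313],
  ![0, 485523],
  ![0, 698628],
  ![786895, 213105],
  ![205633, 429587],
  ![573790, 213111],
  ![727582, 1000000],
  ![679459, 611274],
  ![204685, 0],
  ![573784, 426216],
  ![1000000, 0],
  ![0, 1000000],
  ![786889, 426210],
  ![786895, 0],
  ![301372, 1000000],
  ![893446, 610762],
  ![416405, 583483],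
  ![151405, 848595],
  ![570413, 794367],
  ![388726, 320541],
  ![514477, 1000000],
  ![1000000, 795315],
  ![786894, 795316],
  ![206334, 642691],
  ![573791, 0],
  ![0, 272418],
  ![357309, 793666],
  ![1000000, 426209],
  ![940687, 1000000],
  ![1000000, 213105],
  ![204684, 213106]]

lemma Z_bound : ∀ i : Fin 32, ∀ t : Fin 2, 0 ≤ Z i t ∧ Z i t ≤ 1000000 := by decide

lemma Z_dist : ∀ i j : Fin 32, i ≠ j →
    (213000 : ℤ)^2 ≤ (Z i 0 - Z j 0)^2 + (Z i 1 - Z j 1)^2 := by decide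

/-- There exist 32 points in the unit square `[0,1]²` with all pairwise
Euclidean distances at least 0.213 (point-spreading form of the improved
packing of 32 equal disks in a square). -/
theorem packing_32_disks :
    ∃ p : Fin 32 → EuclideanSpace ℝ (Fin 2),
      (∀ i, ∀ t : Fin 2, p i t ∈ Set.Icc (0 : ℝ) 1) ∧
      ∀ i j, i ≠ j → (0.213 : ℝ) ≤ ‖p i - p j‖ := by
  refine ⟨fun i => (WithLp.toLp 2 (fun t => (Z i t : ℝ) / 1000000) : EuclideanSpace ℝ (Fin 2)), ?_, ?_⟩
  · intro i t
    obtain ⟨h0, h1⟩ := Z_bound i t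
    constructor
    · positivity
    · rw [div_le_one (by norm_num)]
      exact_mod_cast h1
  · intro i j hij
    have h := Z_dist i j hij
    have hcast : (213000 : ℝ)^2 ≤ ((Z i 0 : ℝ) - Z j 0)^2 + ((Z i 1 : ℝ) - Z j 1)^2 := by
      exact_mod_cast h
    rw [EuclideanSpace.norm_eq]
    rw [show (0.213 : ℝ) = 213000 / 1000000 by norm_num]
    rw [Real.le_sqrt' (by norm_num)]
    have hsub : ∀ t : Fin 2,
        ((fun i => (WithLp.toLp 2 (fun t => (Z i t : ℝ) / 1000000) : EuclideanSpace ℝ (Fin 2))) i -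
         (fun i => (WithLp.toLp 2 (fun t => (Z i t : ℝ) / 1000000) : EuclideanSpace ℝ (Fin 2))) j) t
        = ((Z i t : ℝ) - Z j t) / 1000000 := by
      intro t
      simp [sub_div]
    rw [Fin.sum_univ_two, hsub 0, hsub 1]
    simp only [Real.norm_eq_abs, sq_abs]
    rw [div_pow, div_pow, div_pow, ← add_div, div_le_div_iff₀ (by norm_num) (by norm_num)]
    nlinarith [hcast]
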